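/- For every bounded measurable function f on the unit circle, the Riesz projection P⁺f (the function whose Fourier coefficients agree with those of f for nonnegative indices and vanish for negative indices) satisfies ‖P⁺f‖₄⁴ ≤ ‖f‖∞² · ‖f‖₂², where norms are with respect to normalized Lebesgue measure on the circle. -/

import Mathlib

open MeasureTheory Real Filter
open scoped ENNReal Topology

/-- Normalized Haar (Lebesgue) measure on the circle `𝕋 = ℝ/ℤ`. -/
noncomputable def muT : Measure (AddCircle (1:ℝ)) := AddCircle.haarAddCircle

/-- `g` is the Riesz projection `P⁺f` of `f`: the Fourier coefficients of `g` agree with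
those of `f` for nonnegative indices and vanish for negative indices. -/
def IsRiesz (f g : AddCircle (1:ℝ) → ℂ) : Prop :=
  MemLp f 2 muT ∧ MemLp g 2 muT ∧
    (∀ n : ℤ, 0 ≤ n → fourierCoeff g n = fourierCoeff f n) ∧
    (∀ n : ℤ, n < 0 → fourierCoeff g n = 0)

section RieszAux

open scoped NNReal ComplexConjugate


instance : IsProbabilityMeasure muT := by unfold muT; infer_instance

lemma fourierCoeff_congr_ae' {u v : AddCircle (1:ℝ) → ℂ} (h : u =ᵐ[muT] v) (n : ℤ) :
    fourierCoeff u n = fourierCoeff v n :=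
  integral_congr_ae (h.mono fun x hx => by simp only [hx])

lemma norm_fourier (n : ℤ) (x : AddCircle (1:ℝ)) : ‖fourier n x‖ = 1 := by
  simp [fourier_apply, Circle.norm_coe]

-- conj MemLp
lemma memLp_conj {u : AddCircle (1:ℝ) → ℂ} {p : ℝ≥0∞} (hu : MemLp u p muT) :
    MemLp (fun x => conj (u x)) p muT := by
  refine ⟨RCLike.continuous_conj.comp_aestronglyMeasurable hu.1, ?_⟩
  rw [show (fun x => conj (u x)) = fun x => star (u x) from rfl]
  calc eLpNorm (fun x => star (u x)) p muT = eLpNorm u p muT := by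
        apply eLpNorm_congr_norm_ae; filter_upwards with x; simp
    _ < ⊤ := hu.2

-- mul by fourier MemLp
lemma memLp_mul_fourier {u : AddCircle (1:ℝ) → ℂ} {p : ℝ≥0∞} (hu : MemLp u p muT) (m : ℤ) :
    MemLp (fun x => u x * fourier m x) p muT := by
  refine ⟨hu.1.mul (fourier m).continuous.aestronglyMeasurable, ?_⟩
  calc eLpNorm (fun x => u x * fourier m x) p muT = eLpNorm u p muT := by
        apply eLpNorm_congr_norm_ae; filter_upwards with x
        rw [norm_mul, norm_fourier, mul_one]
    _ < ⊤ := hu.2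

lemma fourierCoeff_conj {u : AddCircle (1:ℝ) → ℂ} (n : ℤ) :
    fourierCoeff (fun x => conj (u x)) n = conj (fourierCoeff u (-n)) := by
  unfold fourierCoeff
  rw [← integral_conj]
  congr 1
  ext x
  simp only [smul_eq_mul, map_mul, neg_neg]
  rw [← fourier_neg]


lemma fourierCoeff_mul_fourier {u : AddCircle (1:ℝ) → ℂ} (m n : ℤ) :
    fourierCoeff (fun x => u x * fourier m x) n = fourierCoeff u (n - m) := by
  unfold fourierCoeff
  congr 1
  ext x
  simp only [smul_eq_mul]
  rw [show -(n - m) = -n + m by ring, fourier_add]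
  ring

lemma inner_toLp_eq {u v : AddCircle (1:ℝ) → ℂ} (hu : MemLp u 2 muT) (hv : MemLp v 2 muT) :
    ∫ x, conj (u x) * v x ∂muT = ∑' k : ℤ, conj (fourierCoeff u k) * fourierCoeff v k := by
  have hU : MemLp u 2 AddCircle.haarAddCircle := hu
  have hV : MemLp v 2 AddCircle.haarAddCircle := hv
  set U : Lp ℂ 2 (@AddCircle.haarAddCircle 1 _) := hU.toLp u
  set V : Lp ℂ 2 (@AddCircle.haarAddCircle 1 _) := hV.toLp v
  have h1 : (inner ℂ U V : ℂ) = ∫ x, conj (u x) * v x ∂muT := by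
    rw [MeasureTheory.L2.inner_def]
    refine integral_congr_ae ?_
    filter_upwards [hU.coeFn_toLp, hV.coeFn_toLp] with x hx hy
    simp [U, V, hx, hy, RCLike.inner_apply, mul_comm]
  have h2 : (inner ℂ U V : ℂ) =
      ∑' k : ℤ, conj (fourierCoeff u k) * fourierCoeff v k := by
    rw [← (@fourierBasis 1 _).repr.inner_map_map U V, lp.inner_eq_tsum]
    congr 1; ext k
    rw [fourierBasis_repr, fourierBasis_repr, RCLike.inner_apply']
    congr 1
    · exact congrArg conj (fourierCoeff_congr_ae' (hU.coeFn_toLp) k)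
    · exact fourierCoeff_congr_ae' (hV.coeFn_toLp) k
  rw [← h1, h2]

lemma fourierCoeff_mul {u v : AddCircle (1:ℝ) → ℂ} (hu : MemLp u 2 muT) (hv : MemLp v 2 muT)
    (n : ℤ) :
    fourierCoeff (fun x => u x * v x) n
      = ∑' k : ℤ, fourierCoeff u (-k) * fourierCoeff v (k + n) := by
  have h1 : fourierCoeff (fun x => u x * v x) n
      = ∫ x, conj (conj (u x)) * (v x * fourier (-n) x) ∂muT := by
    unfold fourierCoeff
    refine integral_congr_ae (Eventually.of_forall fun x => ?_)
    simp only [smul_eq_mul, Complex.conj_conj]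
    ring
  rw [h1, inner_toLp_eq (memLp_conj hu) (memLp_mul_fourier hv (-n))]
  congr 1; ext k
  rw [fourierCoeff_conj, Complex.conj_conj, fourierCoeff_mul_fourier]
  congr 2
  ring

lemma fourierCoeff_mul_eq_zero_of_nonneg
    {u v : AddCircle (1:ℝ) → ℂ} (hu : MemLp u 2 muT) (hv : MemLp v 2 muT)
    (hu0 : ∀ k : ℤ, k < 0 → fourierCoeff u k = 0)
    (hv0 : ∀ k : ℤ, k < 0 → fourierCoeff v k = 0)
    {n : ℤ} (hn : n < 0) : fourierCoeff (fun x => u x * v x) n = 0 := by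
  rw [fourierCoeff_mul hu hv]
  have hterm : ∀ k : ℤ, fourierCoeff u (-k) * fourierCoeff v (k + n) = 0 := by
    intro k
    rcases lt_or_ge (-k) 0 with hk | hk
    · rw [hu0 _ hk, zero_mul]
    · rw [hv0 (k + n) (by omega), mul_zero]
  rw [tsum_congr hterm, tsum_zero]

lemma fourierCoeff_mul_eq_zero_of_neg
    {u v : AddCircle (1:ℝ) → ℂ} (hu : MemLp u 2 muT) (hv : MemLp v 2 muT)
    (hu0 : ∀ k : ℤ, 0 ≤ k → fourierCoeff u k = 0)
    (hv0 : ∀ k : ℤ, 0 ≤ k → fourierCoeff v k = 0)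
    {n : ℤ} (hn : 0 ≤ n) : fourierCoeff (fun x => u x * v x) n = 0 := by
  rw [fourierCoeff_mul hu hv]
  have hterm : ∀ k : ℤ, fourierCoeff u (-k) * fourierCoeff v (k + n) = 0 := by
    intro k
    rcases le_or_gt 0 (-k) with hk | hk
    · rw [hu0 _ hk, zero_mul]
    · rw [hv0 (k + n) (by omega), mul_zero]
  rw [tsum_congr hterm, tsum_zero]

lemma integrable_mul_continuous {u : AddCircle (1:ℝ) → ℂ} (hu : Integrable u muT)
    (φ : C(AddCircle (1:ℝ), ℂ)) : Integrable (fun x => u x * φ x) muT := by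
  have := hu.bdd_mul φ.continuous.aestronglyMeasurable (Eventually.of_forall fun x => φ.norm_coe_le_norm x)
  exact this.congr (Eventually.of_forall fun x => mul_comm _ _)

lemma integral_mul_continuous_eq_zero {u : AddCircle (1:ℝ) → ℂ}
    (hu : Integrable u muT) (h : ∀ n, fourierCoeff u n = 0)
    (φ : C(AddCircle (1:ℝ), ℂ)) : ∫ x, u x * φ x ∂muT = 0 := by
  classical
  let Λlin : C(AddCircle (1:ℝ), ℂ) →ₗ[ℂ] ℂ :=
    { toFun := fun ψ => ∫ x, u x * ψ x ∂muT
      map_add' := by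
        intro ψ χ
        simp only [ContinuousMap.add_apply]
        rw [← integral_add (integrable_mul_continuous hu ψ) (integrable_mul_continuous hu χ)]
        congr 1; ext x; ring
      map_smul' := by
        intro c ψ
        simp only [ContinuousMap.smul_apply, smul_eq_mul, RingHom.id_apply]
        rw [← integral_const_mul]
        congr 1; ext x; ring }
  have hbound : ∀ ψ : C(AddCircle (1:ℝ), ℂ), ‖Λlin ψ‖ ≤ (∫ x, ‖u x‖ ∂muT) * ‖ψ‖ := by
    intro ψ
    refine (norm_integral_le_integral_norm _).trans ?_
    rw [← integral_mul_const]
    refine integral_mono (integrable_mul_continuous hu ψ).norm (hu.norm.mul_const _) ?_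
    intro x
    show ‖u x * ψ x‖ ≤ ‖u x‖ * ‖ψ‖
    rw [norm_mul]
    exact mul_le_mul_of_nonneg_left (ψ.norm_coe_le_norm x) (norm_nonneg _)
  let Λ : C(AddCircle (1:ℝ), ℂ) →L[ℂ] ℂ := Λlin.mkContinuous _ hbound
  have hker : Submodule.span ℂ (Set.range (@fourier 1)) ≤ LinearMap.ker (Λ : C(AddCircle (1:ℝ), ℂ) →ₗ[ℂ] ℂ) := by
    rw [Submodule.span_le]
    rintro _ ⟨n, rfl⟩
    simp only [SetLike.mem_coe, LinearMap.mem_ker]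
    show (∫ x, u x * fourier n x ∂muT) = 0
    have : (∫ x, u x * fourier n x ∂muT) = fourierCoeff u (-n) := by
      unfold fourierCoeff
      rw [neg_neg]
      congr 1; ext x; simp [smul_eq_mul]; ring
    rw [this, h]
  have hclosed : (Submodule.span ℂ (Set.range (@fourier 1))).topologicalClosure
      ≤ LinearMap.ker (Λ : C(AddCircle (1:ℝ), ℂ) →ₗ[ℂ] ℂ) :=
    Submodule.topologicalClosure_minimal _ hker (ContinuousLinearMap.isClosed_ker Λ)
  rw [span_fourier_closure_eq_top] at hclosed
  exact hclosed (Submodule.mem_top (x := φ))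

lemma ae_eq_zero_of_fourierCoeff_eq_zero {u : AddCircle (1:ℝ) → ℂ}
    (hu : Integrable u muT) (h : ∀ n, fourierCoeff u n = 0) : u =ᵐ[muT] 0 := by
  have hint : ∫ x, u x ∂muT = 0 := by
    have := h 0
    unfold fourierCoeff at this
    simpa [muT] using this
  have hset : ∀ s : Set (AddCircle (1:ℝ)), MeasurableSet s → ∫ x in s, u x ∂muT = 0 := by
    have h_eq : (inferInstance : MeasurableSpace (AddCircle (1:ℝ)))
        = MeasurableSpace.generateFrom {s : Set (AddCircle (1:ℝ)) | IsClosed s} :=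
      BorelSpace.measurable_eq.trans borel_eq_generateFrom_isClosed
    refine fun s hs => MeasurableSpace.induction_on_inter
      (C := fun s _ => ∫ x in s, u x ∂muT = 0) h_eq ?_ ?_ ?_ ?_ ?_ s hs
    · exact fun a ha b hb _ => ha.inter hb
    · simp
    · -- closed sets
      intro t ht
      replace ht : IsClosed t := ht
      set ψ := ht.apprSeq with hψ
      have hφcont : ∀ n, Continuous fun x => Complex.ofReal (NNReal.toReal (ψ n x)) := fun n =>
        Complex.continuous_ofReal.comp (NNReal.continuous_coe.comp (ψ n).continuous)
      have hzero : ∀ n, ∫ x, u x * Complex.ofReal (NNReal.toReal (ψ n x)) ∂muT = 0 := fun n =>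
        integral_mul_continuous_eq_zero hu h ⟨_, hφcont n⟩
      have hlim : Tendsto (fun n => ∫ x, u x * Complex.ofReal (NNReal.toReal (ψ n x)) ∂muT) atTop
          (𝓝 (∫ x, u x * Complex.ofReal
            (NNReal.toReal (Set.indicator t (fun _ => (1:ℝ≥0)) x)) ∂muT)) := by
        refine tendsto_integral_of_dominated_convergence (fun x => ‖u x‖)
          (fun n => hu.1.mul (hφcont n).aestronglyMeasurable) hu.norm ?_ ?_
        · intro n
          filter_upwards with x
          rw [norm_mul]
          have h1 : ψ n x ≤ 1 := HasOuterApproxClosed.apprSeq_apply_le_one ht n x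
          have h2 : ‖Complex.ofReal (NNReal.toReal (ψ n x))‖ ≤ 1 := by
            rw [Complex.norm_real, Real.norm_eq_abs, NNReal.abs_eq]
            exact_mod_cast h1
          exact mul_le_of_le_one_right (norm_nonneg _) h2
        · filter_upwards with x
          have hten := tendsto_pi_nhds.mp (HasOuterApproxClosed.tendsto_apprSeq ht) x
          have hc : Tendsto (fun n => Complex.ofReal (NNReal.toReal (ψ n x))) atTop
              (𝓝 (Complex.ofReal (NNReal.toReal (Set.indicator t (fun _ => (1:ℝ≥0)) x)))) := by
            have := (Complex.continuous_ofReal.tendsto _).comp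
              ((NNReal.continuous_coe.tendsto _).comp hten)
            exact this
          exact hc.const_mul (u x)
      have hind : (∫ x, u x * Complex.ofReal
            (NNReal.toReal (Set.indicator t (fun _ => (1:ℝ≥0)) x)) ∂muT)
          = ∫ x in t, u x ∂muT := by
        rw [← integral_indicator ht.measurableSet]
        congr 1
        ext x
        by_cases hx : x ∈ t <;> simp [hx]
      rw [hind] at hlim
      have h0 : Tendsto (fun n => ∫ x, u x * Complex.ofReal (NNReal.toReal (ψ n x)) ∂muT)
          atTop (𝓝 (0:ℂ)) := by
        simp only [hzero]
        exact tendsto_const_nhds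
      exact (tendsto_nhds_unique h0 hlim).symm
    · intro t htm hC
      have h2 := integral_add_compl htm hu
      rw [hC, hint] at h2
      simpa using h2
    · intro g hdisj hgm hCg
      rw [integral_iUnion hgm hdisj hu.integrableOn]
      simp [hCg]
  exact hu.ae_eq_zero_of_forall_setIntegral_eq_zero fun s hs _ => hset s hs

lemma integrable_fourier_smul {u : AddCircle (1:ℝ) → ℂ} (hu : Integrable u muT) (n : ℤ) :
    Integrable (fun x => fourier n x • u x) muT := by
  have := hu.bdd_mul (fourier n).continuous.aestronglyMeasurable
    (Eventually.of_forall fun x => le_of_eq (norm_fourier n x))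
  exact this.congr (Eventually.of_forall fun x => by simp [smul_eq_mul])

lemma fourierCoeff_sub {u v : AddCircle (1:ℝ) → ℂ} (hu : Integrable u muT)
    (hv : Integrable v muT) (n : ℤ) :
    fourierCoeff (fun x => u x - v x) n = fourierCoeff u n - fourierCoeff v n := by
  rw [show fourierCoeff (fun x => u x - v x) n
        = ∫ t, fourier (-n) t • (u t - v t) ∂muT from rfl,
      show fourierCoeff u n = ∫ t, fourier (-n) t • u t ∂muT from rfl,
      show fourierCoeff v n = ∫ t, fourier (-n) t • v t ∂muT from rfl,
      ← integral_sub (integrable_fourier_smul hu (-n)) (integrable_fourier_smul hv (-n))]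
  congr 1; ext x; simp [smul_sub]; try ring

lemma eLpNorm_le_of_coeff {u w : AddCircle (1:ℝ) → ℂ} (hu : Integrable u muT)
    (huam : AEStronglyMeasurable u muT) (hw : MemLp w 2 muT)
    (hcoeff : ∀ n : ℤ, fourierCoeff u n = if 0 ≤ n then fourierCoeff w n else 0) :
    eLpNorm u 2 muT ≤ eLpNorm w 2 muT := by
  have hw' : MemLp w 2 AddCircle.haarAddCircle := hw
  set a := (@fourierBasis 1 _).repr (hw'.toLp w) with ha
  have han : ∀ n, a n = fourierCoeff w n := by
    intro n
    rw [ha, fourierBasis_repr]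
    exact fourierCoeff_congr_ae' hw'.coeFn_toLp n
  set c : ℤ → ℂ := fun n => if 0 ≤ n then a n else 0 with hcdef
  have hp2 : (0:ℝ) < (2:ℝ≥0∞).toReal := by norm_num
  have hc : Memℓp c 2 := by
    refine memℓp_gen ?_
    have hsum := (lp.memℓp a).summable hp2
    refine Summable.of_nonneg_of_le (fun n => by positivity) (fun n => ?_) hsum
    by_cases hn : 0 ≤ n
    · simp [hcdef, hn]
    · simp only [hcdef, hn, if_false, norm_zero]
      rw [Real.zero_rpow (by norm_num)]
      positivity
  set W : Lp ℂ 2 (@AddCircle.haarAddCircle 1 _) := (@fourierBasis 1 _).repr.symm ⟨c, hc⟩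
    with hWdef
  have hWc : ∀ n, fourierCoeff (W : AddCircle (1:ℝ) → ℂ) n = c n := by
    intro n
    rw [← fourierBasis_repr, hWdef, LinearIsometryEquiv.apply_symm_apply]
  have hWint : Integrable (W : AddCircle (1:ℝ) → ℂ) muT :=
    (Lp.memLp W).integrable (by norm_num)
  have hdiff : ∀ n, fourierCoeff (fun x => u x - W x) n = 0 := by
    intro n
    rw [fourierCoeff_sub hu hWint, hcoeff n, hWc n, hcdef]
    by_cases hn : 0 ≤ n <;> simp [hn, han]
  have hae : u =ᵐ[muT] (W : AddCircle (1:ℝ) → ℂ) := by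
    have h0 := ae_eq_zero_of_fourierCoeff_eq_zero (hu.sub hWint) hdiff
    filter_upwards [h0] with x hx
    simpa [sub_eq_zero] using hx
  have h1 : eLpNorm u 2 muT = ENNReal.ofReal ‖W‖ := by
    rw [eLpNorm_congr_ae hae]
    show eLpNorm (W : AddCircle (1:ℝ) → ℂ) 2 AddCircle.haarAddCircle = _
    rw [← ENNReal.ofReal_toReal (Lp.eLpNorm_ne_top W), ← Lp.norm_def]
  have h2 : eLpNorm w 2 muT = ENNReal.ofReal ‖hw'.toLp w‖ := by
    rw [Lp.norm_toLp]
    exact (ENNReal.ofReal_toReal hw'.2.ne).symm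
  rw [h1, h2]
  apply ENNReal.ofReal_le_ofReal
  rw [hWdef, LinearIsometryEquiv.norm_map, ← (@fourierBasis 1 _).repr.norm_map (hw'.toLp w)]
  rw [lp.norm_eq_tsum_rpow hp2, lp.norm_eq_tsum_rpow hp2]
  apply Real.rpow_le_rpow (tsum_nonneg fun n => by positivity) ?_ (by norm_num)
  refine Summable.tsum_le_tsum (fun n => ?_) ((lp.memℓp (⟨c, hc⟩ : lp (fun _ : ℤ => ℂ) 2)).summable hp2)
    ((lp.memℓp a).summable hp2)
  show ‖c n‖ ^ ((2:ℝ≥0∞).toReal) ≤ ‖a n‖ ^ ((2:ℝ≥0∞).toReal)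
  by_cases hn : 0 ≤ n
  · simp [hcdef, hn]
  · simp only [hcdef, hn, if_false, norm_zero]
    rw [Real.zero_rpow (by norm_num)]
    positivity

lemma integrable_mul_L2 {u v : AddCircle (1:ℝ) → ℂ} (hu : MemLp u 2 muT) (hv : MemLp v 2 muT) :
    Integrable (fun x => u x * v x) muT := by
  have hu' : MemLp (fun x => conj (u x)) 2 AddCircle.haarAddCircle := memLp_conj hu
  have hv' : MemLp v 2 AddCircle.haarAddCircle := hv
  have := MeasureTheory.L2.integrable_inner (𝕜 := ℂ) (hu'.toLp _) (hv'.toLp v)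
  refine (Integrable.congr this ?_ : Integrable _ muT)
  filter_upwards [hu'.coeFn_toLp, hv'.coeFn_toLp] with x hx hy
  simp [hx, hy, RCLike.inner_apply, mul_comm]

lemma eLpNorm_eq_of_coeff_norm_eq {u v : AddCircle (1:ℝ) → ℂ} (hu : MemLp u 2 muT)
    (hv : MemLp v 2 muT) (h : ∀ n, ‖fourierCoeff u n‖ = ‖fourierCoeff v n‖) :
    eLpNorm u 2 muT = eLpNorm v 2 muT := by
  have hu' : MemLp u 2 AddCircle.haarAddCircle := hu
  have hv' : MemLp v 2 AddCircle.haarAddCircle := hv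
  have hp2 : (0:ℝ) < (2:ℝ≥0∞).toReal := by norm_num
  have hnorm : ‖hu'.toLp u‖ = ‖hv'.toLp v‖ := by
    rw [← (@fourierBasis 1 _).repr.norm_map (hu'.toLp u),
        ← (@fourierBasis 1 _).repr.norm_map (hv'.toLp v),
        lp.norm_eq_tsum_rpow hp2, lp.norm_eq_tsum_rpow hp2]
    congr 1
    apply tsum_congr
    intro n
    rw [fourierBasis_repr, fourierBasis_repr,
        fourierCoeff_congr_ae' hu'.coeFn_toLp, fourierCoeff_congr_ae' hv'.coeFn_toLp, h n]
  calc eLpNorm u 2 muT = ENNReal.ofReal ‖hu'.toLp u‖ := by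
        rw [Lp.norm_toLp]; exact (ENNReal.ofReal_toReal hu'.2.ne).symm
    _ = ENNReal.ofReal ‖hv'.toLp v‖ := by rw [hnorm]
    _ = eLpNorm v 2 muT := by
        rw [Lp.norm_toLp, ENNReal.ofReal_toReal hv'.2.ne]; rfl


end RieszAux

/-- `‖P⁺f‖₄⁴ ≤ ‖f‖_∞² * ‖f‖₂²` for every bounded measurable `f` on the circle. -/
theorem riesz_L4_bound (f g : AddCircle (1:ℝ) → ℂ) (hf : MemLp f ∞ muT)
    (h : IsRiesz f g) :
    eLpNorm g 4 muT ^ 4 ≤ eLpNorm f ∞ muT ^ 2 * eLpNorm f 2 muT ^ 2 := by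
  obtain ⟨hf2, hg2, hpos, hneg⟩ := h
  set h' : AddCircle (1:ℝ) → ℂ := fun x => f x - g x with hh'def
  have hh2 : MemLp h' 2 muT := hf2.sub hg2
  set v : AddCircle (1:ℝ) → ℂ := fun x => g x - h' x with hvdef
  have hv2 : MemLp v 2 muT := hg2.sub hh2
  set w : AddCircle (1:ℝ) → ℂ := fun x => f x * v x with hwdef
  have hw2 : MemLp w 2 muT := by
    refine ⟨hf.1.mul hv2.1, ?_⟩
    calc eLpNorm w 2 muT ≤ eLpNorm f ∞ muT * eLpNorm v 2 muT := by
          have := eLpNorm_le_eLpNorm_top_mul_eLpNorm 2 f hv2.1 (· * ·) 1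
            (Eventually.of_forall fun x => by rw [one_mul]; exact le_of_eq (nnnorm_mul _ _))
          rwa [ENNReal.coe_one, one_mul] at this
      _ < ⊤ := ENNReal.mul_lt_top hf.2 hv2.2
  -- coefficients of h'
  have hhc : ∀ n, fourierCoeff h' n = fourierCoeff f n - fourierCoeff g n := fun n =>
    fourierCoeff_sub (hf2.integrable (by norm_num)) (hg2.integrable (by norm_num)) n
  have hh_pos : ∀ n : ℤ, 0 ≤ n → fourierCoeff h' n = 0 := fun n hn => by
    rw [hhc n, hpos n hn, sub_self]
  have hh_neg : ∀ n : ℤ, n < 0 → fourierCoeff h' n = fourierCoeff f n := fun n hn => by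
    rw [hhc n, hneg n hn, sub_zero]
  -- coefficients of v
  have hvc : ∀ n, fourierCoeff v n = fourierCoeff g n - fourierCoeff h' n := fun n =>
    fourierCoeff_sub (hg2.integrable (by norm_num)) (hh2.integrable (by norm_num)) n
  -- spectral supports of g*g and h'*h'
  have hgg_neg : ∀ n : ℤ, n < 0 → fourierCoeff (fun x => g x * g x) n = 0 := fun n hn =>
    fourierCoeff_mul_eq_zero_of_nonneg hg2 hg2 hneg hneg hn
  have hhh_pos : ∀ n : ℤ, 0 ≤ n → fourierCoeff (fun x => h' x * h' x) n = 0 := fun n hn =>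
    fourierCoeff_mul_eq_zero_of_neg hh2 hh2 hh_pos hh_pos hn
  -- w = g*g - h'*h' pointwise
  have hwgg : w = fun x => g x * g x - h' x * h' x := by
    funext x
    simp only [hwdef, hvdef, hh'def]
    ring
  have hwc : ∀ n, fourierCoeff w n
      = fourierCoeff (fun x => g x * g x) n - fourierCoeff (fun x => h' x * h' x) n := by
    intro n
    rw [hwgg]
    exact fourierCoeff_sub (integrable_mul_L2 hg2 hg2) (integrable_mul_L2 hh2 hh2) n
  -- the key comparison
  have hkey : eLpNorm (fun x => g x * g x) 2 muT ≤ eLpNorm w 2 muT := by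
    refine eLpNorm_le_of_coeff (integrable_mul_L2 hg2 hg2) (hg2.1.mul hg2.1) hw2 ?_
    intro n
    by_cases hn : 0 ≤ n
    · rw [if_pos hn, hwc n, hhh_pos n hn, sub_zero]
    · rw [if_neg hn, hgg_neg n (by omega)]
  -- ‖v‖₂ = ‖f‖₂
  have hveq : eLpNorm v 2 muT = eLpNorm f 2 muT := by
    refine eLpNorm_eq_of_coeff_norm_eq hv2 hf2 fun n => ?_
    rcases le_or_gt 0 n with hn | hn
    · rw [hvc n, hh_pos n hn, sub_zero, hpos n hn]
    · rw [hvc n, hh_neg n hn, hneg n hn, zero_sub, norm_neg]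
  -- ‖g‖₄⁴ = ‖g*g‖₂²
  have h4 : eLpNorm g 4 muT ^ 4 = eLpNorm (fun x => g x * g x) 2 muT ^ 2 := by
    have hn : eLpNorm (fun x => g x * g x) 2 muT
        = eLpNorm (fun x => ‖g x‖ ^ (2:ℝ)) 2 muT := by
      apply eLpNorm_congr_norm_ae
      filter_upwards with x
      rw [norm_mul, Real.norm_rpow_of_nonneg (norm_nonneg _), norm_norm,
        show (2:ℝ) = ((2:ℕ):ℝ) by norm_num, Real.rpow_natCast]
      ring
    rw [hn, eLpNorm_norm_rpow g (by norm_num : (0:ℝ) < 2)]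
    rw [show (2 : ℝ≥0∞) * ENNReal.ofReal 2 = 4 by
      rw [ENNReal.ofReal_ofNat]; norm_num]
    rw [← ENNReal.rpow_natCast (eLpNorm g 4 muT ^ (2:ℝ)) 2, ← ENNReal.rpow_mul,
        ← ENNReal.rpow_natCast (eLpNorm g 4 muT) 4]
    norm_num
  calc eLpNorm g 4 muT ^ 4 = eLpNorm (fun x => g x * g x) 2 muT ^ 2 := h4
    _ ≤ eLpNorm w 2 muT ^ 2 := pow_le_pow_left₀ zero_le hkey 2
    _ ≤ (eLpNorm f ∞ muT * eLpNorm v 2 muT) ^ 2 := by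
        apply pow_le_pow_left₀ zero_le
        have := eLpNorm_le_eLpNorm_top_mul_eLpNorm 2 f hv2.1 (· * ·) 1
          (Eventually.of_forall fun x => by rw [one_mul]; exact le_of_eq (nnnorm_mul _ _))
        rwa [ENNReal.coe_one, one_mul] at this
    _ = eLpNorm f ∞ muT ^ 2 * eLpNorm f 2 muT ^ 2 := by rw [hveq, mul_pow]
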